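/- arXiv:1404.1541 — 3 statements merged into one kernel-verified Lean document; each statement's English description precedes it below -/
import Mathlib

section
/- Let (R,m) be a Noetherian local ring and φ : R → R a local endomorphism of finite length. The sequence aₙ = log(length_R(R/φⁿ(m)R)) is subadditive: a_{n+k} ≤ aₙ + a_k for all n, k ≥ 1; consequently the limit h_loc(φ) = lim_{n→∞} (1/n) log(length_R(R/φⁿ(m)R)) exists and is a nonnegative real number. -/
open IsLocalRing Ideal Filter

/-- The length of a module, defined as the Krull dimension (longest chain length) of its
lattice of submodules; for modules of finite length this is the usual length. -/
noncomputable def flen (A : Type*) [Ring A] (M : Type*) [AddCommGroup M] [Module A M] : ℕ :=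
  (WithBot.unbotD 0 (Order.krullDim (Submodule A M))).toNat

/-- The entropy sequence `n ↦ (1/n) log length_A (A / σⁿ(𝔞)A)` of a local endomorphism `σ`
of a local ring `(A,𝔞)`; here `σ ^ n` is the `n`-fold composite of `σ`. -/
noncomputable def entSeq (A : Type*) [CommRing A] [IsLocalRing A] (σ : A →+* A) (n : ℕ) : ℝ :=
  Real.log (flen A (A ⧸ Ideal.map (σ ^ n) (maximalIdeal A))) / n

open Order

/-- All strict chains in `α` have length at most `n`. -/
def ChainsLE (α : Type*) [Preorder α] (n : ℕ) : Prop := ∀ p : LTSeries α, p.length ≤ n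

lemma prod_series_le {α β : Type*} [Preorder α] [Preorder β] (p : LTSeries (α × β)) :
    (p.length : ℕ∞) ≤ Order.height p.last.1 + Order.height p.last.2 := by
  obtain ⟨n, hn⟩ : ∃ n, p.length = n := ⟨_, rfl⟩
  induction n generalizing p with
  | zero => simp [hn]
  | succ n ih =>
    have hlen : p.eraseLast.length = n := by simp [RelSeries.eraseLast, hn]
    have hlt : p.eraseLast.last < p.last := by
      have := p.step ⟨p.length - 1, by omega⟩
      simpa [RelSeries.eraseLast, RelSeries.last, Fin.last, hn] using this
    have H := ih p.eraseLast hlen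
    rw [hlen] at H
    rw [hn]
    rcases Prod.lt_iff.mp hlt with ⟨h1, h2⟩ | ⟨h1, h2⟩
    · have e1 : Order.height p.eraseLast.last.1 + 1 ≤ Order.height p.last.1 := by
        rw [Order.height_eq_iSup_lt_height p.last.1]
        exact le_iSup₂_of_le _ h1 le_rfl
      have e2 : Order.height p.eraseLast.last.2 ≤ Order.height p.last.2 :=
        Order.height_mono h2
      calc ((n + 1 : ℕ) : ℕ∞) = (n : ℕ∞) + 1 := by push_cast; ring
        _ ≤ (Order.height p.eraseLast.last.1 + Order.height p.eraseLast.last.2) + 1 := by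
            exact add_le_add_left H 1
        _ = (Order.height p.eraseLast.last.1 + 1) + Order.height p.eraseLast.last.2 := by ring
        _ ≤ _ := add_le_add e1 e2
    · have e1 : Order.height p.eraseLast.last.1 ≤ Order.height p.last.1 :=
        Order.height_mono h1
      have e2 : Order.height p.eraseLast.last.2 + 1 ≤ Order.height p.last.2 := by
        rw [Order.height_eq_iSup_lt_height p.last.2]
        exact le_iSup₂_of_le _ h2 le_rfl
      calc ((n + 1 : ℕ) : ℕ∞) = (n : ℕ∞) + 1 := by push_cast; ring
        _ ≤ (Order.height p.eraseLast.last.1 + Order.height p.eraseLast.last.2) + 1 := by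
            exact add_le_add_left H 1
        _ = Order.height p.eraseLast.last.1 + (Order.height p.eraseLast.last.2 + 1) := by ring
        _ ≤ _ := add_le_add e1 e2

lemma ChainsLE.prod {α β : Type*} [Preorder α] [Preorder β] {a b : ℕ}
    (ha : ChainsLE α a) (hb : ChainsLE β b) : ChainsLE (α × β) (a + b) := by
  intro p
  have h1 : Order.height p.last.1 ≤ (a : ℕ∞) :=
    Order.height_le fun q _ => by exact_mod_cast Nat.cast_le.mpr (ha q)
  have h2 : Order.height p.last.2 ≤ (b : ℕ∞) :=
    Order.height_le fun q _ => by exact_mod_cast Nat.cast_le.mpr (hb q)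
  have h3 := (prod_series_le p).trans (add_le_add h1 h2)
  have h4 : (p.length : ℕ∞) ≤ ((a + b : ℕ) : ℕ∞) := h3.trans_eq (by push_cast; ring)
  exact_mod_cast h4
section ModuleChains

variable {R M M' : Type*} [Ring R] [AddCommGroup M] [Module R M]
  [AddCommGroup M'] [Module R M']

lemma ChainsLE.of_surjective (f : M →ₗ[R] M') (hf : Function.Surjective f) {n : ℕ}
    (h : ChainsLE (Submodule R M) n) : ChainsLE (Submodule R M') n := fun p => by
  have hmono : Monotone (Submodule.comap f) := fun _ _ hle => Submodule.comap_mono hle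
  have hsm : StrictMono (Submodule.comap f) :=
    hmono.strictMono_of_injective (Submodule.comap_injective_of_surjective hf)
  simpa using h (p.map _ hsm)

lemma ChainsLE.congr (e : M ≃ₗ[R] M') {n : ℕ}
    (h : ChainsLE (Submodule R M) n) : ChainsLE (Submodule R M') n :=
  h.of_surjective e.toLinearMap e.surjective

lemma ChainsLE.pred_of_surjective (f : M →ₗ[R] M') (hf : Function.Surjective f)
    (hk : LinearMap.ker f ≠ ⊥) {n : ℕ}
    (h : ChainsLE (Submodule R M) n) : ChainsLE (Submodule R M') (n - 1) := fun p => by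
  have hmono : Monotone (Submodule.comap f) := fun _ _ hle => Submodule.comap_mono hle
  have hsm : StrictMono (Submodule.comap f) :=
    hmono.strictMono_of_injective (Submodule.comap_injective_of_surjective hf)
  have hker : LinearMap.ker f ≤ (p.map _ hsm).head := by
    have heq : (p.map _ hsm).head = Submodule.comap f p.head := rfl
    rw [heq]
    intro x hx
    have hx0 : f x = 0 := hx
    simp [Submodule.mem_comap, hx0]
  have hhead : ⊥ < (p.map _ hsm).head :=
    bot_lt_iff_ne_bot.mpr fun hb => hk (le_bot_iff.mp (hb ▸ hker))
  have := h (((p.map _ hsm)).cons ⊥ hhead)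
  simp only [RelSeries.cons_length, LTSeries.map_length] at this
  omega

lemma ChainsLE.quot (N : Submodule R M) {a b : ℕ}
    (hN : ChainsLE (Submodule R N) a) (hQ : ChainsLE (Submodule R (M ⧸ N)) b) :
    ChainsLE (Submodule R M) (a + b) := fun p => by
  have hf : StrictMono (fun S : Submodule R M =>
      ((S.comap N.subtype, S.map N.mkQ) : Submodule R N × Submodule R (M ⧸ N))) := by
    intro S T hST
    refine lt_of_le_of_ne ⟨Submodule.comap_mono hST.le, Submodule.map_mono hST.le⟩ ?_
    intro heq
    have h1 : S.comap N.subtype = T.comap N.subtype := congrArg Prod.fst heq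
    have h2 : S.map N.mkQ = T.map N.mkQ := congrArg Prod.snd heq
    have hinf : N ⊓ S = N ⊓ T := by
      rw [← Submodule.map_comap_subtype, ← Submodule.map_comap_subtype, h1]
    have hsup : S ⊔ N = T ⊔ N := by
      have := congrArg (Submodule.comap N.mkQ) h2
      rwa [Submodule.comap_map_eq, Submodule.comap_map_eq, Submodule.ker_mkQ] at this
    exact hST.ne (eq_of_le_of_inf_le_of_sup_le hST.le
      (by rw [inf_comm S N, inf_comm T N, hinf]) (by rw [hsup]))
  simpa using (hN.prod hQ) (p.map _ hf)

lemma ChainsLE.of_subsingleton [Subsingleton M] : ChainsLE (Submodule R M) 0 := fun p => by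
  by_contra hc
  have h01 : p ⟨0, by omega⟩ < p ⟨1, by omega⟩ := p.strictMono (by simp [Fin.lt_def])
  have : Subsingleton (Submodule R M) :=
    ⟨fun S T => by ext x; simp [Subsingleton.elim x 0]⟩
  exact h01.ne (Subsingleton.elim _ _)

lemma ChainsLE.of_isSimpleModule [IsSimpleModule R M] : ChainsLE (Submodule R M) 1 := fun p => by
  by_contra hc
  push_neg at hc
  have h01 : p ⟨0, by omega⟩ < p ⟨1, by omega⟩ := p.strictMono (by simp [Fin.lt_def])
  have h12 : p ⟨1, by omega⟩ < p ⟨2, by omega⟩ := p.strictMono (by simp [Fin.lt_def])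
  rcases eq_bot_or_eq_top (p ⟨1, by omega⟩) with h | h
  · exact not_lt_bot (h ▸ h01)
  · exact not_top_lt (h ▸ h12)

lemma exists_chainsLE_of_isFiniteLength (h : IsFiniteLength R M) :
    ∃ n, ChainsLE (Submodule R M) n := by
  induction h with
  | of_subsingleton => exact ⟨0, ChainsLE.of_subsingleton⟩
  | of_simple_quotient h ih =>
    obtain ⟨a, ha⟩ := ih
    exact ⟨a + 1, ChainsLE.quot _ ha ChainsLE.of_isSimpleModule⟩

lemma flen_le_of_chainsLE {n : ℕ} (h : ChainsLE (Submodule R M) n) : flen R M ≤ n := by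
  rw [flen, Order.krullDim_eq_iSup_length, WithBot.unbotD_coe]
  have : (⨆ p : LTSeries (Submodule R M), (p.length : ℕ∞)) ≤ (n : ℕ∞) :=
    iSup_le fun p => Nat.cast_le.mpr (h p)
  exact ENat.toNat_le_of_le_coe this

lemma length_le_flen (p : LTSeries (Submodule R M)) {n : ℕ} (h : ChainsLE (Submodule R M) n) :
    p.length ≤ flen R M := by
  rw [flen, Order.krullDim_eq_iSup_length, WithBot.unbotD_coe]
  have hub : (⨆ q : LTSeries (Submodule R M), (q.length : ℕ∞)) ≤ (n : ℕ∞) :=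
    iSup_le fun q => Nat.cast_le.mpr (h q)
  have hle : (p.length : ℕ∞) ≤ ⨆ q : LTSeries (Submodule R M), (q.length : ℕ∞) :=
    le_iSup (fun q : LTSeries (Submodule R M) => (q.length : ℕ∞)) p
  have hne : (⨆ q : LTSeries (Submodule R M), (q.length : ℕ∞)) ≠ ⊤ :=
    fun ht => by rw [ht] at hub; exact absurd hub (by simp)
  calc p.length = ((p.length : ℕ∞)).toNat := by simp
    _ ≤ _ := ENat.toNat_le_toNat hle hne

lemma ChainsLE.flen_bound (h : ∃ n, ChainsLE (Submodule R M) n) :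
    ChainsLE (Submodule R M) (flen R M) := fun p => by
  obtain ⟨n, hn⟩ := h; exact length_le_flen p hn

lemma one_le_flen [Nontrivial M] {n : ℕ} (h : ChainsLE (Submodule R M) n) : 1 ≤ flen R M := by
  have hbt : (⊥ : Submodule R M) < ⊤ := bot_lt_top
  exact length_le_flen ((RelSeries.singleton _ (⊤ : Submodule R M)).cons ⊥ hbt) h

end ModuleChains
section Artinian

open IsLocalRing

variable {R : Type*} [CommRing R] [IsNoetherianRing R] [IsLocalRing R]

lemma isArtinian_of_maximalIdeal_smul_eq_bot {M : Type*} [AddCommGroup M] [Module R M]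
    [Module.Finite R M] (h : maximalIdeal R • (⊤ : Submodule R M) = ⊥) : IsArtinian R M := by
  have htor : Module.IsTorsionBySet R M (maximalIdeal R) := by
    intro x a
    have : (a : R) • x ∈ (⊥ : Submodule R M) := by
      rw [← h]; exact Submodule.smul_mem_smul a.2 Submodule.mem_top
    simpa using this
  letI : Module (R ⧸ maximalIdeal R) M := htor.module
  haveI : IsScalarTower R (R ⧸ maximalIdeal R) M := htor.isScalarTower
  letI : Field (R ⧸ maximalIdeal R) := Ideal.Quotient.field (maximalIdeal R)
  haveI : Module.Finite (R ⧸ maximalIdeal R) M :=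
    Module.Finite.of_restrictScalars_finite R (R ⧸ maximalIdeal R) M
  haveI hart : IsArtinian (R ⧸ maximalIdeal R) M := isArtinian_of_fg_of_artinian'
  have F : Submodule R M ↪o Submodule (R ⧸ maximalIdeal R) M := by
    refine OrderEmbedding.ofMapLEIff (fun N => ?_) (fun a b => ?_)
    · exact
      { carrier := N
        add_mem' := fun ha hb => N.add_mem ha hb
        zero_mem' := N.zero_mem
        smul_mem' := fun c x hx => by
          refine Quotient.inductionOn' c (fun b => ?_)
          have hb : (Quotient.mk'' b : R ⧸ maximalIdeal R) • x = b • x :=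
            Module.IsTorsionBySet.mk_smul htor b x
          rw [hb]
          exact N.smul_mem b hx }
    · exact Iff.rfl
  exact ⟨F.wellFounded hart.wf⟩

lemma isArtinian_of_pow_smul_eq_bot {M : Type*} [AddCommGroup M] [Module R M]
    [Module.Finite R M] (e : ℕ) (h : maximalIdeal R ^ e • (⊤ : Submodule R M) = ⊥) :
    IsArtinian R M := by
  induction e generalizing M with
  | zero =>
    rw [pow_zero, Ideal.one_eq_top, Submodule.top_smul] at h
    have hsub : Subsingleton M := by
      constructor
      intro a b
      have ha : a ∈ (⊥ : Submodule R M) := h ▸ Submodule.mem_top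
      have hb : b ∈ (⊥ : Submodule R M) := h ▸ Submodule.mem_top
      simp only [Submodule.mem_bot] at ha hb
      rw [ha, hb]
    haveI := hsub
    exact isArtinian_of_finite
  | succ e ih =>
    set N : Submodule R M := maximalIdeal R • ⊤ with hN
    haveI : IsNoetherian R M := isNoetherian_of_isNoetherianRing_of_finite R M
    haveI : Module.Finite R N := Module.Finite.iff_fg.mpr (IsNoetherian.noetherian N)
    have hNkill : maximalIdeal R ^ e • (⊤ : Submodule R N) = ⊥ := by
      apply Submodule.map_injective_of_injective (N.injective_subtype)
      rw [Submodule.map_smul'', Submodule.map_bot, Submodule.map_top, Submodule.range_subtype,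
        hN, ← mul_smul, ← pow_succ]
      exact h
    haveI hart1 : IsArtinian R N := ih hNkill
    have hmapN : Submodule.map N.mkQ N = ⊥ := by
      apply le_bot_iff.mp
      rintro x ⟨y, hy, rfl⟩
      simpa [Submodule.mem_bot] using (Submodule.Quotient.mk_eq_zero N).mpr hy
    have hQkill : maximalIdeal R • (⊤ : Submodule R (M ⧸ N)) = ⊥ := by
      rw [← Submodule.range_mkQ N, ← Submodule.map_top, ← Submodule.map_smul'', ← hN, hmapN]
    haveI hart2 : IsArtinian R (M ⧸ N) := isArtinian_of_maximalIdeal_smul_eq_bot hQkill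
    exact isArtinian_of_range_eq_ker N.subtype N.mkQ
      (by rw [Submodule.range_subtype, Submodule.ker_mkQ])

end Artinian
section Radical

open IsLocalRing Ideal

variable {R : Type*} [CommRing R] [IsNoetherianRing R] [IsLocalRing R]

lemma rad_map_eq (φ : R →+* R)
    (hφ : (Ideal.map φ (maximalIdeal R)).radical = maximalIdeal R)
    (K : Ideal R) (hK : K.radical = maximalIdeal R) :
    (Ideal.map φ K).radical = maximalIdeal R := by
  have hKle : K ≤ maximalIdeal R := hK ▸ Ideal.le_radical
  have hle : Ideal.map φ K ≤ maximalIdeal R :=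
    le_trans (Ideal.map_mono hKle) (le_trans Ideal.le_radical hφ.le)
  obtain ⟨e, he⟩ : ∃ e, K.radical ^ e ≤ K :=
    Ideal.exists_radical_pow_le_of_fg K (IsNoetherian.noetherian _)
  rw [hK] at he
  apply le_antisymm
  · calc (Ideal.map φ K).radical ≤ (maximalIdeal R).radical := Ideal.radical_mono hle
      _ = maximalIdeal R := ((maximalIdeal.isMaximal R).isPrime).radical
  · have h1 : Ideal.map φ (maximalIdeal R) ≤ (Ideal.map φ K).radical := by
      rw [Ideal.map_le_iff_le_comap]
      intro x hx
      refine ⟨e, ?_⟩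
      rw [← map_pow]
      exact Ideal.mem_map_of_mem φ (he (Ideal.pow_mem_pow hx e))
    calc maximalIdeal R = (Ideal.map φ (maximalIdeal R)).radical := hφ.symm
      _ ≤ ((Ideal.map φ K).radical).radical := Ideal.radical_mono h1
      _ = (Ideal.map φ K).radical := Ideal.radical_idem _

lemma rad_map_iter (φ : R →+* R)
    (hφ : (Ideal.map φ (maximalIdeal R)).radical = maximalIdeal R) :
    ∀ (n : ℕ) (K : Ideal R), K.radical = maximalIdeal R →
      (Ideal.map (φ ^ n) K).radical = maximalIdeal R := by
  intro n
  induction n with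
  | zero =>
    intro K hK
    rw [pow_zero, show (1 : R →+* R) = RingHom.id R from rfl, Ideal.map_id]
    exact hK
  | succ n ih =>
    intro K hK
    rw [pow_succ, RingHom.mul_def, ← Ideal.map_map]
    exact ih _ (rad_map_eq φ hφ K hK)

lemma rad_pow (φ : R →+* R)
    (hφ : (Ideal.map φ (maximalIdeal R)).radical = maximalIdeal R) (n : ℕ) :
    (Ideal.map (φ ^ n) (maximalIdeal R)).radical = maximalIdeal R :=
  rad_map_iter φ hφ n _ ((maximalIdeal.isMaximal R).isPrime.radical)

end Radical
lemma ChainsLE.mono {α : Type*} [Preorder α] {a b : ℕ} (h : ChainsLE α a) (hab : a ≤ b) :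
    ChainsLE α b := fun p => (h p).trans hab

section Primary

open IsLocalRing Ideal

variable {R : Type*} [CommRing R] [IsNoetherianRing R] [IsLocalRing R]

lemma pow_smul_top_quot_eq_bot {J : Ideal R} {e : ℕ} (he : maximalIdeal R ^ e ≤ J) :
    maximalIdeal R ^ e • (⊤ : Submodule R (R ⧸ J)) = ⊥ := by
  apply le_bot_iff.mp
  rw [Submodule.smul_le]
  intro r hr x _
  obtain ⟨y, rfl⟩ := Submodule.mkQ_surjective (J : Submodule R R) x
  rw [Submodule.mem_bot, show ((J : Submodule R R).mkQ y) = Submodule.Quotient.mk y from rfl,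
    ← Submodule.Quotient.mk_smul, Submodule.Quotient.mk_eq_zero]
  show r • y ∈ J
  simpa [smul_eq_mul] using J.mul_mem_right y (he hr)

lemma exists_chainsLE_quot {J : Ideal R} {e : ℕ} (he : maximalIdeal R ^ e ≤ J) :
    ∃ n, ChainsLE (Submodule R (R ⧸ J)) n := by
  haveI : Module.Finite R (R ⧸ J) :=
    Module.Finite.of_surjective (J : Submodule R R).mkQ (Submodule.mkQ_surjective _)
  haveI hart : IsArtinian R (R ⧸ J) := isArtinian_of_pow_smul_eq_bot e (pow_smul_top_quot_eq_bot he)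
  haveI hnoe : IsNoetherian R (R ⧸ J) := isNoetherian_of_isNoetherianRing_of_finite R (R ⧸ J)
  exact exists_chainsLE_of_isFiniteLength
    ((isFiniteLength_iff_isNoetherian_isArtinian (R := R) (M := R ⧸ J)).mpr ⟨hnoe, hart⟩)

end Primary
section Main

open IsLocalRing Ideal

variable {R : Type*} [CommRing R] [IsNoetherianRing R] [IsLocalRing R]

lemma main_claim (φ : R →+* R)
    (hφ : (Ideal.map φ (maximalIdeal R)).radical = maximalIdeal R) (n : ℕ)
    (hIB : ChainsLE (Submodule R (R ⧸ Ideal.map (φ ^ n) (maximalIdeal R)))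
      (flen R (R ⧸ Ideal.map (φ ^ n) (maximalIdeal R)))) :
    ∀ (c : ℕ) (J : Ideal R), (∃ e, maximalIdeal R ^ e ≤ J) → flen R (R ⧸ J) ≤ c →
      ChainsLE (Submodule R (R ⧸ Ideal.map (φ ^ n) J))
        (c * flen R (R ⧸ Ideal.map (φ ^ n) (maximalIdeal R))) := by
  intro c
  induction c using Nat.strong_induction_on with
  | _ c ih =>
    intro J hJe hflen
    obtain ⟨e, he⟩ := hJe
    set B := flen R (R ⧸ Ideal.map (φ ^ n) (maximalIdeal R)) with hB
    by_cases hJ : J = ⊤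
    · subst hJ
      rw [Ideal.map_top]
      have hsub : Subsingleton (R ⧸ (⊤ : Ideal R)) :=
        Submodule.Quotient.subsingleton_iff.mpr rfl
      exact (@ChainsLE.of_subsingleton R _ _ _ _ hsub).mono (Nat.zero_le _)
    · -- J proper
      haveI hnt : Nontrivial (R ⧸ J) := Ideal.Quotient.nontrivial_iff.mpr hJ
      have hfinJ : ∃ nn, ChainsLE (Submodule R (R ⧸ J)) nn := exists_chainsLE_quot he
      have hCJ : ChainsLE (Submodule R (R ⧸ J)) (flen R (R ⧸ J)) := ChainsLE.flen_bound hfinJ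
      have hc1 : 1 ≤ c := le_trans (one_le_flen hCJ) hflen
      obtain ⟨c', rfl⟩ : ∃ c', c = c' + 1 := ⟨c - 1, by omega⟩
      haveI : Module.Finite R (R ⧸ J) :=
        Module.Finite.of_surjective (J : Submodule R R).mkQ (Submodule.mkQ_surjective _)
      haveI hart : IsArtinian R (R ⧸ J) :=
        isArtinian_of_pow_smul_eq_bot e (pow_smul_top_quot_eq_bot he)
      haveI hnoe : IsNoetherian R (R ⧸ J) := isNoetherian_of_isNoetherianRing_of_finite R (R ⧸ J)
      -- find a minimal nonzero submodule S of R/J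
      obtain ⟨S, hSne, hSmin⟩ := IsArtinian.set_has_minimal
        {T : Submodule R (R ⧸ J) | T ≠ ⊥} ⟨⊤, top_ne_bot⟩
      obtain ⟨y, hyS, hy0⟩ := (Submodule.ne_bot_iff S).mp hSne
      -- S is spanned by y
      have hspan : Submodule.span R {y} = S := by
        have hle : Submodule.span R {y} ≤ S := by
          rw [Submodule.span_le, Set.singleton_subset_iff]; exact hyS
        by_contra hne
        exact hSmin _ (fun hb => hy0 (by
          have : y ∈ Submodule.span R {y} := Submodule.mem_span_singleton_self y
          rw [hb] at this; simpa using this)) (lt_of_le_of_ne hle hne)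
      -- m • S = ⊥ by Nakayama + minimality
      have hmS : maximalIdeal R • S = ⊥ := by
        have hle : maximalIdeal R • S ≤ S := Submodule.smul_le_right
        have hneq : maximalIdeal R • S ≠ S := by
          intro heq
          apply hSne
          exact Submodule.eq_bot_of_le_smul_of_le_jacobson_bot (maximalIdeal R) S
            (IsNoetherian.noetherian S) heq.ge (IsLocalRing.maximalIdeal_le_jacobson ⊥)
        by_contra hb
        exact hSmin _ hb (lt_of_le_of_ne hle hneq)
      -- lift y to x₀
      obtain ⟨x₀, hx₀⟩ := Ideal.Quotient.mk_surjective y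
      have hx₀J : x₀ ∉ J := fun hmem =>
        hy0 (hx₀ ▸ (Ideal.Quotient.eq_zero_iff_mem.mpr hmem))
      have hmx₀ : ∀ r ∈ maximalIdeal R, r * x₀ ∈ J := by
        intro r hr
        have h1 : r • y ∈ maximalIdeal R • S := Submodule.smul_mem_smul hr hyS
        rw [hmS, Submodule.mem_bot] at h1
        rw [← Ideal.Quotient.eq_zero_iff_mem, _root_.map_mul, hx₀]
        calc Ideal.Quotient.mk J r * y = r • y := by
              rw [← hx₀]; rfl
          _ = 0 := h1
      set J' : Ideal R := J ⊔ Ideal.span {x₀} with hJ'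
      have hJ'e : maximalIdeal R ^ e ≤ J' := le_trans he le_sup_left
      have hJJ' : J < J' := lt_of_le_of_ne le_sup_left (fun heq => hx₀J
        (heq ▸ Submodule.mem_sup_right (Submodule.mem_span_singleton_self x₀) : x₀ ∈ J))
      -- flen (R/J') ≤ c'
      have hflen' : flen R (R ⧸ J') ≤ c' := by
        have hsur : Function.Surjective
            (Submodule.mapQ (J : Submodule R R) (J' : Submodule R R) LinearMap.id hJJ'.le) := by
          intro z
          obtain ⟨x, rfl⟩ := Submodule.mkQ_surjective (J' : Submodule R R) z
          exact ⟨Submodule.Quotient.mk x, by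
            rw [Submodule.mapQ_apply]; rfl⟩
        have hker : LinearMap.ker
            (Submodule.mapQ (J : Submodule R R) (J' : Submodule R R) LinearMap.id hJJ'.le) ≠ ⊥ := by
          rw [Submodule.ne_bot_iff]
          refine ⟨Submodule.Quotient.mk x₀, ?_, ?_⟩
          · rw [LinearMap.mem_ker, Submodule.mapQ_apply, LinearMap.id_apply,
              Submodule.Quotient.mk_eq_zero]
            exact Submodule.mem_sup_right (Submodule.mem_span_singleton_self x₀)
          · rw [ne_eq, Submodule.Quotient.mk_eq_zero]
            exact hx₀J
        have := (hCJ.pred_of_surjective _ hsur hker)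
        have h2 := flen_le_of_chainsLE this
        omega
      -- inductive hypothesis at J'
      have hIH := ih c' (by omega) J' ⟨e, hJ'e⟩ hflen'
      -- now assemble
      set a : Ideal R := Ideal.map (φ ^ n) J with ha
      set b : Ideal R := Ideal.map (φ ^ n) J' with hb'
      have hab : a ≤ b := Ideal.map_mono hJJ'.le
      set N : Submodule R (R ⧸ a) := Submodule.map (a : Submodule R R).mkQ (b : Submodule R R)
        with hN
      -- (R⧸a)⧸N ≃ R⧸b
      have hquotN : ChainsLE (Submodule R ((R ⧸ a) ⧸ N)) (c' * B) :=
        hIH.congr (Submodule.quotientQuotientEquivQuotient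
          (a : Submodule R R) (b : Submodule R R) hab).symm
      -- N is cyclic, generated by mk (φ^n x₀), and killed by I = map (φ^n) m
      set z : R := (φ ^ n) x₀ with hz
      set y₁ : R ⧸ a := Submodule.Quotient.mk z with hy₁
      have hbsup : b = a ⊔ Ideal.span {z} := by
        rw [hb', hJ', Ideal.map_sup, Ideal.map_span, Set.image_singleton, ha]
      have hNspan : N = Submodule.span R {y₁} := by
        rw [hN, hbsup]
        have : ((a ⊔ Ideal.span {z} : Ideal R) : Submodule R R)
            = (a : Submodule R R) ⊔ (Ideal.span {z} : Submodule R R) := rfl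
        rw [this, Submodule.map_sup]
        have hmapa : Submodule.map (a : Submodule R R).mkQ (a : Submodule R R) = ⊥ := by
          apply le_bot_iff.mp
          rintro x ⟨w, hw, rfl⟩
          simpa [Submodule.mem_bot] using (Submodule.Quotient.mk_eq_zero (a : Submodule R R)).mpr hw
        rw [hmapa, bot_sup_eq, ← Ideal.submodule_span_eq, Submodule.map_span,
          Set.image_singleton]
        rfl
      -- annihilation: I * span{z} ≤ a
      have hann : Ideal.map (φ ^ n) (maximalIdeal R) * Ideal.span {z} ≤ a := by
        have h1 : Ideal.map (φ ^ n) (maximalIdeal R) * Ideal.span {z}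
            = Ideal.map (φ ^ n) (maximalIdeal R * Ideal.span {x₀}) := by
          rw [Ideal.map_mul, Ideal.map_span, Set.image_singleton]
        rw [h1, ha]
        apply Ideal.map_mono
        rw [Ideal.mul_le]
        intro r hr s hs
        obtain ⟨t, rfl⟩ := Ideal.mem_span_singleton'.mp hs
        have : r * (t * x₀) = t * (r * x₀) := by ring
        rw [this]
        exact J.mul_mem_left t (hmx₀ r hr)
      -- N is a quotient of R ⧸ I
      have hNle : ChainsLE (Submodule R N) B := by
        have hy₁N : y₁ ∈ N := by
          rw [hNspan]; exact Submodule.mem_span_singleton_self y₁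
        set ℓ : R →ₗ[R] N := LinearMap.toSpanSingleton R N ⟨y₁, hy₁N⟩ with hℓ
        have hℓsur : Function.Surjective ℓ := by
          rintro ⟨w, hw⟩
          rw [hNspan] at hw
          obtain ⟨t, ht⟩ := Submodule.mem_span_singleton.mp hw
          exact ⟨t, Subtype.ext (by simpa [hℓ, LinearMap.toSpanSingleton_apply] using ht)⟩
        have hker : ((Ideal.map (φ ^ n) (maximalIdeal R) : Ideal R) : Submodule R R)
            ≤ LinearMap.ker ℓ := by
          intro t ht
          rw [LinearMap.mem_ker]
          apply Subtype.ext
          have : t • y₁ = (0 : R ⧸ a) := by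
            rw [hy₁, ← Submodule.Quotient.mk_smul, Submodule.Quotient.mk_eq_zero]
            have : t • z ∈ Ideal.map (φ ^ n) (maximalIdeal R) * Ideal.span {z} :=
              (smul_eq_mul t z).symm ▸ Ideal.mul_mem_mul ht (Ideal.mem_span_singleton_self z)
            exact hann this
          simpa [hℓ, LinearMap.toSpanSingleton_apply] using this
        set g := Submodule.liftQ _ ℓ hker
        have hgsur : Function.Surjective g := by
          intro w
          obtain ⟨t, ht⟩ := hℓsur w
          exact ⟨Submodule.Quotient.mk t, by rw [Submodule.liftQ_apply]; exact ht⟩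
        exact hIB.of_surjective g hgsur
      have := ChainsLE.quot N hNle hquotN
      have harith : B + c' * B = (c' + 1) * B := by ring
      rw [harith] at this
      exact this

end Main


/-- For a finite-length local endomorphism `φ` of a Noetherian local ring `(R,m)`,
the sequence `aₙ = log length_R (R/φⁿ(m)R)` is subadditive, and consequently the limit
`h_loc(φ) = lim (1/n) aₙ` exists and is a nonnegative real number. -/

theorem local_entropy_exists {R : Type*} [CommRing R] [IsNoetherianRing R] [IsLocalRing R]
    (φ : R →+* R) [IsLocalHom φ]
    (hφ : (Ideal.map φ (maximalIdeal R)).radical = maximalIdeal R) :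
    (∀ n k : ℕ, 1 ≤ n → 1 ≤ k →
        Real.log (flen R (R ⧸ Ideal.map (φ ^ (n + k)) (maximalIdeal R))) ≤
          Real.log (flen R (R ⧸ Ideal.map (φ ^ n) (maximalIdeal R))) +
          Real.log (flen R (R ⧸ Ideal.map (φ ^ k) (maximalIdeal R)))) ∧
    ∃ h : ℝ, 0 ≤ h ∧ Tendsto (entSeq R φ) atTop (nhds h) := by
  set ℓ : ℕ → ℕ := fun k => flen R (R ⧸ Ideal.map (φ ^ k) (maximalIdeal R)) with hℓ
  have hrad : ∀ k, (Ideal.map (φ ^ k) (maximalIdeal R)).radical = maximalIdeal R :=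
    rad_pow φ hφ
  have hpow : ∀ k, ∃ e, maximalIdeal R ^ e ≤ Ideal.map (φ ^ k) (maximalIdeal R) := by
    intro k
    obtain ⟨e, he⟩ := Ideal.exists_radical_pow_le_of_fg (Ideal.map (φ ^ k) (maximalIdeal R))
      (IsNoetherian.noetherian _)
    rw [hrad k] at he
    exact ⟨e, he⟩
  have hfin : ∀ k, ∃ nn, ChainsLE (Submodule R (R ⧸ Ideal.map (φ ^ k) (maximalIdeal R))) nn := by
    intro k
    obtain ⟨e, he⟩ := hpow k
    exact exists_chainsLE_quot he
  have hC : ∀ k, ChainsLE (Submodule R (R ⧸ Ideal.map (φ ^ k) (maximalIdeal R))) (ℓ k) :=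
    fun k => ChainsLE.flen_bound (hfin k)
  have hne : ∀ k, Ideal.map (φ ^ k) (maximalIdeal R) ≠ ⊤ := by
    intro k heq
    have h1 : Ideal.map (φ ^ k) (maximalIdeal R) ≤ maximalIdeal R :=
      le_trans Ideal.le_radical (hrad k).le
    exact (maximalIdeal.isMaximal R).ne_top (top_le_iff.mp (heq ▸ h1))
  have hpos : ∀ k, 1 ≤ ℓ k := by
    intro k
    haveI : Nontrivial (R ⧸ Ideal.map (φ ^ k) (maximalIdeal R)) :=
      Ideal.Quotient.nontrivial_iff.mpr (hne k)
    exact one_le_flen (hC k)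
  have key : ∀ n k, ℓ (n + k) ≤ ℓ k * ℓ n := by
    intro n k
    obtain ⟨e, he⟩ := hpow k
    have hclaim := main_claim φ hφ n (hC n) (ℓ k) (Ideal.map (φ ^ k) (maximalIdeal R))
      ⟨e, he⟩ le_rfl
    have heq : Ideal.map (φ ^ n) (Ideal.map (φ ^ k) (maximalIdeal R))
        = Ideal.map (φ ^ (n + k)) (maximalIdeal R) := by
      rw [Ideal.map_map, pow_add, RingHom.mul_def]
    rw [heq] at hclaim
    exact flen_le_of_chainsLE hclaim
  set u : ℕ → ℝ := fun k => Real.log (ℓ k) with hu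
  have hun : ∀ k, 0 ≤ u k := fun k => Real.log_nonneg (by exact_mod_cast hpos k)
  have husub : ∀ n k, u (n + k) ≤ u n + u k := by
    intro n k
    have h1 : (0 : ℝ) < (ℓ (n + k) : ℝ) := by exact_mod_cast hpos (n + k)
    have h2 : (ℓ (n + k) : ℝ) ≤ (ℓ k : ℝ) * (ℓ n : ℝ) := by exact_mod_cast key n k
    calc u (n + k) ≤ Real.log ((ℓ k : ℝ) * (ℓ n : ℝ)) := Real.log_le_log h1 h2
      _ = Real.log (ℓ k) + Real.log (ℓ n) := Real.log_mul
          (by have := hpos k; positivity) (by have := hpos n; positivity)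
      _ = u n + u k := by rw [add_comm]
  constructor
  · intro n k _ _
    exact husub n k
  · have hsub : Subadditive u := fun a b => husub a b
    have hbdd : BddBelow (Set.range fun n => u n / n) := by
      refine ⟨0, ?_⟩
      rintro x ⟨n, rfl⟩
      exact div_nonneg (hun n) (Nat.cast_nonneg n)
    refine ⟨hsub.lim, ?_, ?_⟩
    · unfold Subadditive.lim
      apply Real.sInf_nonneg
      rintro x ⟨n, _, rfl⟩
      exact div_nonneg (hun n) (Nat.cast_nonneg n)
    · exact hsub.tendsto_lim hbdd
end

section
/- The endomorphism of the formal power series ring (ℤ/2ℤ)⟦x,y,w,s⟧ determined by x ↦ x³+s³, y ↦ y³, w ↦ w⁵+x², s ↦ xs² is of finite length: the ideal (x³+s³, y³, w⁵+x², xs²) has radical equal to the maximal ideal (x,y,w,s). -/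
open IsLocalRing MvPowerSeries


noncomputable abbrev T := MvPowerSeries (Fin 4) (ZMod 2)

lemma coeff_eq (g : T) (d : Fin 4 →₀ ℕ) : coeff d g = g d := rfl

lemma mem_span_X_aux {f : T} (hf : constantCoeff f = 0) :
    f ∈ Ideal.span {(X 0 : T), X 1, X 2, X 3} := by
  classical
  set p0 : T := fun e => f (e + Finsupp.single 0 1) with hp0
  set p1 : T := fun e => if e 0 = 0 then f (e + Finsupp.single 1 1) else 0 with hp1
  set p2 : T := fun e => if e 0 = 0 ∧ e 1 = 0 then f (e + Finsupp.single 2 1) else 0 with hp2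
  set p3 : T := fun e => if e 0 = 0 ∧ e 1 = 0 ∧ e 2 = 0 then f (e + Finsupp.single 3 1) else 0 with hp3
  have key : f = X 0 * p0 + X 1 * p1 + X 2 * p2 + X 3 * p3 := by
    ext d
    have sub01 : ((d - Finsupp.single (1:Fin 4) 1 : Fin 4 →₀ ℕ)) 0 = d 0 := by
      rw [Finsupp.tsub_apply, Finsupp.single_apply, if_neg (by decide), tsub_zero]
    have sub02 : ((d - Finsupp.single (2:Fin 4) 1 : Fin 4 →₀ ℕ)) 0 = d 0 := by
      rw [Finsupp.tsub_apply, Finsupp.single_apply, if_neg (by decide), tsub_zero]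
    have sub12 : ((d - Finsupp.single (2:Fin 4) 1 : Fin 4 →₀ ℕ)) 1 = d 1 := by
      rw [Finsupp.tsub_apply, Finsupp.single_apply, if_neg (by decide), tsub_zero]
    have sub03 : ((d - Finsupp.single (3:Fin 4) 1 : Fin 4 →₀ ℕ)) 0 = d 0 := by
      rw [Finsupp.tsub_apply, Finsupp.single_apply, if_neg (by decide), tsub_zero]
    have sub13 : ((d - Finsupp.single (3:Fin 4) 1 : Fin 4 →₀ ℕ)) 1 = d 1 := by
      rw [Finsupp.tsub_apply, Finsupp.single_apply, if_neg (by decide), tsub_zero]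
    have sub23 : ((d - Finsupp.single (3:Fin 4) 1 : Fin 4 →₀ ℕ)) 2 = d 2 := by
      rw [Finsupp.tsub_apply, Finsupp.single_apply, if_neg (by decide), tsub_zero]
    have e0 : coeff d (X 0 * p0) = if 1 ≤ d 0 then coeff d f else 0 := by
      rw [X, coeff_monomial_mul, one_mul]
      by_cases h : Finsupp.single (0:Fin 4) 1 ≤ d
      · rw [if_pos h, if_pos (Finsupp.single_le_iff.mp h), coeff_eq, hp0]
        simp only [tsub_add_cancel_of_le h]
        rfl
      · rw [if_neg h, if_neg (fun hc => h (Finsupp.single_le_iff.mpr hc))]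
    have e1 : coeff d (X 1 * p1) =
        if 1 ≤ d 1 ∧ d 0 = 0 then coeff d f else 0 := by
      rw [X, coeff_monomial_mul, one_mul]
      by_cases h : Finsupp.single (1:Fin 4) 1 ≤ d
      · rw [coeff_eq, hp1]
        simp only [sub01, tsub_add_cancel_of_le h, if_pos h]
        by_cases h0 : d 0 = 0
        · rw [if_pos h0, if_pos ⟨Finsupp.single_le_iff.mp h, h0⟩]; rfl
        · rw [if_neg h0, if_neg (fun hc => h0 hc.2)]
      · rw [if_neg h, if_neg (fun hc => h (Finsupp.single_le_iff.mpr hc.1))]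
    have e2 : coeff d (X 2 * p2) =
        if 1 ≤ d 2 ∧ d 0 = 0 ∧ d 1 = 0 then coeff d f else 0 := by
      rw [X, coeff_monomial_mul, one_mul]
      by_cases h : Finsupp.single (2:Fin 4) 1 ≤ d
      · rw [coeff_eq, hp2]
        simp only [sub02, sub12, tsub_add_cancel_of_le h, if_pos h]
        by_cases h0 : d 0 = 0 ∧ d 1 = 0
        · rw [if_pos h0, if_pos ⟨Finsupp.single_le_iff.mp h, h0⟩]; rfl
        · rw [if_neg h0, if_neg (fun hc => h0 hc.2)]
      · rw [if_neg h, if_neg (fun hc => h (Finsupp.single_le_iff.mpr hc.1))]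
    have e3 : coeff d (X 3 * p3) =
        if 1 ≤ d 3 ∧ d 0 = 0 ∧ d 1 = 0 ∧ d 2 = 0 then coeff d f else 0 := by
      rw [X, coeff_monomial_mul, one_mul]
      by_cases h : Finsupp.single (3:Fin 4) 1 ≤ d
      · rw [coeff_eq, hp3]
        simp only [sub03, sub13, sub23, tsub_add_cancel_of_le h, if_pos h]
        by_cases h0 : d 0 = 0 ∧ d 1 = 0 ∧ d 2 = 0
        · rw [if_pos h0, if_pos ⟨Finsupp.single_le_iff.mp h, h0⟩]; rfl
        · rw [if_neg h0, if_neg (fun hc => h0 hc.2)]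
      · rw [if_neg h, if_neg (fun hc => h (Finsupp.single_le_iff.mpr hc.1))]
    rw [map_add, map_add, map_add, e0, e1, e2, e3]
    by_cases h0 : d 0 = 0
    · by_cases h1 : d 1 = 0
      · by_cases h2 : d 2 = 0
        · by_cases h3 : d 3 = 0
          · have hd : d = 0 := by
              ext j; fin_cases j <;> assumption
            subst hd
            simp only [Finsupp.coe_zero, Pi.zero_apply]
            rw [if_neg (by simp), if_neg (by simp), if_neg (by simp), if_neg (by simp)]
            simpa using hf
          · rw [if_neg (by simp [h0]), if_neg (by simp [h1]), if_neg (by simp [h2]),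
              if_pos ⟨Nat.one_le_iff_ne_zero.mpr h3, h0, h1, h2⟩]
            ring
        · rw [if_neg (by simp [h0]), if_neg (by simp [h1]),
            if_pos ⟨Nat.one_le_iff_ne_zero.mpr h2, h0, h1⟩, if_neg (by simp [h2])]
          ring
      · rw [if_neg (by simp [h0]), if_pos ⟨Nat.one_le_iff_ne_zero.mpr h1, h0⟩,
          if_neg (by simp [h1]), if_neg (by simp [h1])]
        ring
    · rw [if_pos (Nat.one_le_iff_ne_zero.mpr h0), if_neg (by simp [h0]),
        if_neg (by simp [h0]), if_neg (by simp [h0])]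
      ring
  rw [key]
  have hm : ∀ i : Fin 4, (X i : T) ∈ Ideal.span {(X 0 : T), X 1, X 2, X 3} := by
    intro i
    fin_cases i <;> apply Ideal.subset_span <;> simp
  exact add_mem (add_mem (add_mem (Ideal.mul_mem_right _ _ (hm 0))
    (Ideal.mul_mem_right _ _ (hm 1))) (Ideal.mul_mem_right _ _ (hm 2)))
    (Ideal.mul_mem_right _ _ (hm 3))

/-- In `T = (ℤ/2ℤ)⟦x,y,w,s⟧` (with `x = X 0`, `y = X 1`, `w = X 2`, `s = X 3`),
the ideal `(x³+s³, y³, w⁵+x², xs²)` has radical equal to the maximal ideal `(x,y,w,s)`; hence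
the endomorphism determined by `x ↦ x³+s³, y ↦ y³, w ↦ w⁵+x², s ↦ xs²` is of finite length. -/
theorem example_endomorphism_finite_length :
    (Ideal.span {(X 0 : MvPowerSeries (Fin 4) (ZMod 2)) ^ 3 + X 3 ^ 3,
        X 1 ^ 3, X 2 ^ 5 + X 0 ^ 2, X 0 * X 3 ^ 2}).radical =
      maximalIdeal (MvPowerSeries (Fin 4) (ZMod 2)) := by
  set I : Ideal T := Ideal.span {(X 0 : T) ^ 3 + X 3 ^ 3, X 1 ^ 3, X 2 ^ 5 + X 0 ^ 2,
    X 0 * X 3 ^ 2} with hI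
  have h2 : (2 : T) = 0 := by
    rw [← map_ofNat (C (σ := Fin 4) (R := ZMod 2)) 2, show (2 : ZMod 2) = 0 by decide, map_zero]
  have hg1 : (X 0 : T) ^ 3 + X 3 ^ 3 ∈ I := Ideal.subset_span (by simp)
  have hg2 : (X 1 : T) ^ 3 ∈ I := Ideal.subset_span (by simp)
  have hg3 : (X 2 : T) ^ 5 + X 0 ^ 2 ∈ I := Ideal.subset_span (by simp)
  have hg4 : (X 0 : T) * X 3 ^ 2 ∈ I := Ideal.subset_span (by simp)
  have hs : (X 3 : T) ∈ I.radical := by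
    refine Ideal.mem_radical_of_pow_mem (m := 5) (Ideal.le_radical ?_)
    have key : (X 3 : T) ^ 5 = X 3 ^ 2 * (X 0 ^ 3 + X 3 ^ 3) + X 0 ^ 2 * (X 0 * X 3 ^ 2) := by
      linear_combination (-(X 0 ^ 3 * X 3 ^ 2) : T) * h2
    rw [key]
    exact add_mem (Ideal.mul_mem_left _ _ hg1) (Ideal.mul_mem_left _ _ hg4)
  have hx : (X 0 : T) ∈ I.radical := by
    refine Ideal.mem_radical_of_pow_mem (m := 3) ?_
    have key : (X 0 : T) ^ 3 = (X 0 ^ 3 + X 3 ^ 3) + X 3 ^ 3 := by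
      linear_combination (-(X 3 ^ 3) : T) * h2
    rw [key]
    exact add_mem (Ideal.le_radical hg1) (Ideal.pow_mem_of_mem _ hs 3 (by norm_num))
  have hy : (X 1 : T) ∈ I.radical := Ideal.mem_radical_of_pow_mem (m := 3) (Ideal.le_radical hg2)
  have hw : (X 2 : T) ∈ I.radical := by
    refine Ideal.mem_radical_of_pow_mem (m := 5) ?_
    have key : (X 2 : T) ^ 5 = (X 2 ^ 5 + X 0 ^ 2) + X 0 ^ 2 := by
      linear_combination (-(X 0 ^ 2) : T) * h2
    rw [key]
    exact add_mem (Ideal.le_radical hg3) (Ideal.pow_mem_of_mem _ hx 2 (by norm_num))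
  apply le_antisymm
  · rw [Ideal.IsPrime.radical_le_iff (IsLocalRing.maximalIdeal.isMaximal T).isPrime, hI,
      Ideal.span_le]
    intro g hg
    have hc : constantCoeff g = 0 := by
      simp only [Set.mem_insert_iff, Set.mem_singleton_iff] at hg
      rcases hg with rfl | rfl | rfl | rfl <;>
        simp [map_add, map_pow, map_mul, constantCoeff_X]
    rw [SetLike.mem_coe, mem_maximalIdeal, mem_nonunits_iff, isUnit_iff_constantCoeff, hc]
    simp
  · intro g hg
    have hng : ¬ IsUnit g := (mem_maximalIdeal g).mp hg
    have hc : constantCoeff g = 0 := by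
      by_contra h
      exact hng (isUnit_iff_constantCoeff.mpr (isUnit_iff_ne_zero.mpr h))
    refine Ideal.span_le.mpr ?_ (mem_span_X_aux hc)
    intro v hv
    simp only [Set.mem_insert_iff, Set.mem_singleton_iff] at hv
    rcases hv with rfl | rfl | rfl | rfl
    exacts [hx, hy, hw, hs]
end

section
/- Let R = (ℤ/2ℤ)⟦y⟧ with φ(y) = y³, S = (ℤ/2ℤ)⟦x,y,w,s⟧/(s⁶, y³+x²) with ψ induced by x ↦ x³+s³, y ↦ y³, w ↦ w⁵+x², s ↦ xs², and f : R → S the continuous (ℤ/2ℤ)-algebra homomorphism with f(y) = y. Then f is a flat local homomorphism and satisfies f ∘ φ = ψ ∘ f. -/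
open IsLocalRing MvPowerSeries

open scoped TensorProduct

namespace St19

open Finset

noncomputable def e (i j k l : ℕ) : Fin 4 →₀ ℕ := Finsupp.equivFunOnFinite.symm ![i, j, k, l]

@[simp] lemma e_zero (i j k l : ℕ) : e i j k l 0 = i := rfl
@[simp] lemma e_one (i j k l : ℕ) : e i j k l 1 = j := rfl
@[simp] lemma e_two (i j k l : ℕ) : e i j k l 2 = k := rfl
@[simp] lemma e_three (i j k l : ℕ) : e i j k l 3 = l := rfl

lemma eq_e (d : Fin 4 →₀ ℕ) : d = e (d 0) (d 1) (d 2) (d 3) := by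
  ext t; fin_cases t <;> rfl

lemma e_sub_single0 (n i j k l : ℕ) : e i j k l - Finsupp.single 0 n = e (i - n) j k l := by
  ext t; rw [Finsupp.tsub_apply]; fin_cases t <;> simp +decide [Finsupp.single_apply, e]

lemma e_sub_single1 (n i j k l : ℕ) : e i j k l - Finsupp.single 1 n = e i (j - n) k l := by
  ext t; rw [Finsupp.tsub_apply]; fin_cases t <;> simp +decide [Finsupp.single_apply, e]

lemma e_sub_single3 (n i j k l : ℕ) : e i j k l - Finsupp.single 3 n = e i j k (l - n) := by
  ext t; rw [Finsupp.tsub_apply]; fin_cases t <;> simp +decide [Finsupp.single_apply, e]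

/-- coefficient of `x^n * A` -/
lemma coeff_X0_pow_mul (A : MvPowerSeries (Fin 4) (ZMod 2)) (n i j k l : ℕ) :
    coeff (e i j k l) (X 0 ^ n * A) =
      if n ≤ i then coeff (e (i - n) j k l) A else 0 := by
  rw [X_pow_eq, coeff_monomial_mul]
  simp only [Finsupp.single_le_iff, e_zero, one_mul, e_sub_single0]

lemma coeff_X1_pow_mul (A : MvPowerSeries (Fin 4) (ZMod 2)) (n i j k l : ℕ) :
    coeff (e i j k l) (X 1 ^ n * A) =
      if n ≤ j then coeff (e i (j - n) k l) A else 0 := by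
  rw [X_pow_eq, coeff_monomial_mul]
  simp only [Finsupp.single_le_iff, e_one, one_mul, e_sub_single1]

lemma coeff_X3_pow_mul (A : MvPowerSeries (Fin 4) (ZMod 2)) (n i j k l : ℕ) :
    coeff (e i j k l) (X 3 ^ n * A) =
      if n ≤ l then coeff (e i j k (l - n)) A else 0 := by
  rw [X_pow_eq, coeff_monomial_mul]
  simp only [Finsupp.single_le_iff, e_three, one_mul, e_sub_single3]


noncomputable def lam (F : MvPowerSeries (Fin 4) (ZMod 2)) (i j k l : ℕ) : ZMod 2 :=
  ∑ m ∈ range (i+1), if 2*m ≤ i then coeff (e (i - 2*m) (j + 3*m) k l) F else 0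

noncomputable def tail (F : MvPowerSeries (Fin 4) (ZMod 2)) (i j k l : ℕ) : ZMod 2 :=
  ∑ m ∈ range (i+1), if 2*m+2 ≤ i then coeff (e (i - (2*m+2)) (j + 3*m+3) k l) F else 0

noncomputable def lamQ (F : MvPowerSeries (Fin 4) (ZMod 2)) (i j k l : ℕ) : ZMod 2 :=
  ∑ m ∈ range (i+1), if 2*m ≤ i then coeff (e (i - 2*m) (j + 3 + 3*m) k l) F else 0

lemma lam_extend (F : MvPowerSeries (Fin 4) (ZMod 2)) (i j k l n : ℕ) (hn : i + 1 ≤ n) :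
    lam F i j k l =
      ∑ m ∈ range n, if 2*m ≤ i then coeff (e (i - 2*m) (j + 3*m) k l) F else 0 := by
  refine Finset.sum_subset (Finset.range_subset_range.2 hn) ?_
  intro m _ hm
  rw [if_neg (by simp only [Finset.mem_range] at hm; omega)]

lemma lam_peel (F : MvPowerSeries (Fin 4) (ZMod 2)) (i j k l : ℕ) :
    lam F i j k l = coeff (e i j k l) F + tail F i j k l := by
  rw [lam, Finset.sum_range_succ']
  have h0 : (if 2*0 ≤ i then coeff (e (i - 2*0) (j + 3*0) k l) F else 0)
      = coeff (e i j k l) F := by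
    rw [if_pos (by omega)]; norm_num
  rw [h0, tail, Finset.sum_range_succ, if_neg (by omega)]
  rw [add_zero, add_comm]
  rfl

lemma tail_eq_lamQ (F : MvPowerSeries (Fin 4) (ZMod 2)) (i j k l : ℕ) :
    (if 2 ≤ i then lamQ F (i-2) j k l else 0) = tail F i j k l := by
  rcases Nat.lt_or_ge i 2 with hi | hi
  · rw [if_neg (by omega), tail]
    refine (Finset.sum_eq_zero fun m _ => ?_).symm
    rw [if_neg (by omega)]
  · rw [if_pos hi, lamQ, tail]
    rw [Finset.sum_subset (Finset.range_subset_range.2 (show i - 2 + 1 ≤ i + 1 by omega))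
      (fun m hm hm2 => by
        rw [if_neg (by simp only [Finset.mem_range] at hm hm2 ⊢; omega)])]
    refine Finset.sum_congr rfl fun m _ => ?_
    have h1 : i - 2 - 2*m = i - (2*m+2) := by omega
    have h2 : j + 3 + 3*m = j + 3*m+3 := by omega
    rw [h1, h2]
    exact if_congr (by omega) rfl rfl


lemma ch2 (a b : ZMod 2) (h : a + b = 0) : a = b := by revert h; revert a b; decide

lemma ch2self (a : ZMod 2) : a + a = 0 := by revert a; decide

lemma lam_add (F G : MvPowerSeries (Fin 4) (ZMod 2)) (i j k l : ℕ) :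
    lam (F + G) i j k l = lam F i j k l + lam G i j k l := by
  rw [lam, lam, lam, ← Finset.sum_add_distrib]
  refine Finset.sum_congr rfl fun m _ => ?_
  split_ifs <;> simp

lemma lam_s6 (A : MvPowerSeries (Fin 4) (ZMod 2)) (i j k l : ℕ) (hl : l < 6) :
    lam (X 3 ^ 6 * A) i j k l = 0 := by
  rw [lam]
  refine Finset.sum_eq_zero fun m _ => ?_
  rw [coeff_X3_pow_mul, if_neg (show ¬ 6 ≤ l by omega)]
  simp

noncomputable def W (A : MvPowerSeries (Fin 4) (ZMod 2)) (i j k l : ℕ) : ZMod 2 :=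
  ∑ m ∈ range (i+1), if 2*m+2 ≤ i then coeff (e (i - (2*m+2)) (j + 3*m) k l) A else 0

lemma lam_y3 (A : MvPowerSeries (Fin 4) (ZMod 2)) (i j k l : ℕ) (hj : j < 3) :
    lam (X 1 ^ 3 * A) i j k l = W A i j k l := by
  rw [lam]
  simp only [coeff_X1_pow_mul]
  rw [Finset.sum_range_succ']
  have h0 : (if 2*0 ≤ i then (if 3 ≤ j + 3*0 then
      coeff (e (i - 2*0) (j + 3*0 - 3) k l) A else 0) else 0) = 0 := by
    rw [if_pos (by omega), if_neg (by omega)]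
  rw [h0, add_zero, W, Finset.sum_range_succ, if_neg (by omega), add_zero]
  refine Finset.sum_congr rfl fun m _ => ?_
  have h1 : j + 3*(m+1) - 3 = j + 3*m := by omega
  have h2 : i - 2*(m+1) = i - (2*m+2) := by omega
  rw [h1, h2, if_pos (show 3 ≤ j + 3*(m+1) by omega)]
  exact if_congr (by omega) rfl rfl

lemma lam_x2 (A : MvPowerSeries (Fin 4) (ZMod 2)) (i j k l : ℕ) :
    lam (X 0 ^ 2 * A) i j k l = W A i j k l := by
  rw [lam, W]
  refine Finset.sum_congr rfl fun m _ => ?_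
  rw [coeff_X0_pow_mul]
  have h1 : i - 2*m - 2 = i - (2*m+2) := by omega
  rw [h1]
  split_ifs <;> first | rfl | omega

lemma lam_rel (A : MvPowerSeries (Fin 4) (ZMod 2)) (i j k l : ℕ) (hj : j < 3) :
    lam ((X 1 ^ 3 + X 0 ^ 2) * A) i j k l = 0 := by
  rw [add_mul, lam_add, lam_y3 A i j k l hj, lam_x2]
  exact ch2self _


noncomputable def Gser (F : MvPowerSeries (Fin 4) (ZMod 2)) : MvPowerSeries (Fin 4) (ZMod 2) :=
  fun d => if d 1 < 3 then lam F (d 0) (d 1) (d 2) (d 3 + 6) else 0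

noncomputable def Qser (F : MvPowerSeries (Fin 4) (ZMod 2)) : MvPowerSeries (Fin 4) (ZMod 2) :=
  fun d => lamQ F (d 0) (d 1) (d 2) (d 3)

lemma coeff_Gser (F : MvPowerSeries (Fin 4) (ZMod 2)) (i j k l : ℕ) :
    coeff (e i j k l) (Gser F) = if j < 3 then lam F i j k (l + 6) else 0 := rfl

lemma coeff_Qser (F : MvPowerSeries (Fin 4) (ZMod 2)) (i j k l : ℕ) :
    coeff (e i j k l) (Qser F) = lamQ F i j k l := rfl

lemma lamQ_eq_lam (F : MvPowerSeries (Fin 4) (ZMod 2)) (i j k l : ℕ) (h3 : 3 ≤ j) :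
    lamQ F i (j - 3) k l = lam F i j k l := by
  rw [lamQ, lam]
  refine Finset.sum_congr rfl fun m _ => ?_
  rw [show j - 3 + 3 + 3*m = j + 3*m by omega]

lemma decomp_aux (F : MvPowerSeries (Fin 4) (ZMod 2))
    (H : ∀ i j k l, j < 3 → l < 6 → lam F i j k l = 0) (i j k l : ℕ) :
    coeff (e i j k l) F =
      coeff (e i j k l) (X 3 ^ 6 * Gser F + (X 1 ^ 3 + X 0 ^ 2) * Qser F) := by
  rw [map_add, coeff_X3_pow_mul, add_mul, map_add, coeff_X1_pow_mul, coeff_X0_pow_mul,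
    coeff_Gser, coeff_Qser, coeff_Qser, tail_eq_lamQ]
  by_cases hj : j < 3
  · rw [if_neg (by omega : ¬ 3 ≤ j), zero_add, if_pos hj]
    by_cases hl : 6 ≤ l
    · rw [if_pos hl, show l - 6 + 6 = l by omega, lam_peel, add_assoc, ch2self, add_zero]
    · rw [if_neg hl, zero_add]
      have h0 := H i j k l hj (by omega)
      rw [lam_peel] at h0
      exact ch2 _ _ h0
  · rw [if_neg hj, if_pos (by omega : 3 ≤ j), lamQ_eq_lam F i j k l (by omega)]
    rw [lam_peel, add_assoc, ch2self, add_zero, ite_self, zero_add]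

lemma decomp (F : MvPowerSeries (Fin 4) (ZMod 2))
    (H : ∀ i j k l, j < 3 → l < 6 → lam F i j k l = 0) :
    F = X 3 ^ 6 * Gser F + (X 1 ^ 3 + X 0 ^ 2) * Qser F := by
  apply MvPowerSeries.ext
  intro d
  have h := decomp_aux F H (d 0) (d 1) (d 2) (d 3)
  rw [← eq_e d] at h
  exact h

lemma mem_iff (F : MvPowerSeries (Fin 4) (ZMod 2)) :
    F ∈ Ideal.span {(X 3 : MvPowerSeries (Fin 4) (ZMod 2)) ^ 6, X 1 ^ 3 + X 0 ^ 2} ↔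
      ∀ i j k l, j < 3 → l < 6 → lam F i j k l = 0 := by
  constructor
  · intro hF i j k l hj hl
    rw [Ideal.mem_span_pair] at hF
    obtain ⟨a, b, rfl⟩ := hF
    rw [mul_comm a, mul_comm b, lam_add, lam_s6 _ _ _ _ _ hl, lam_rel _ _ _ _ _ hj, add_zero]
  · intro H
    rw [Ideal.mem_span_pair]
    exact ⟨Gser F, Qser F, by rw [mul_comm (Gser F), mul_comm (Qser F)]; exact (decomp F H).symm⟩


lemma coeff_X1_mul (F : MvPowerSeries (Fin 4) (ZMod 2)) (a b k l : ℕ) :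
    coeff (e a b k l) (X 1 * F) =
      if 1 ≤ b then coeff (e a (b - 1) k l) F else 0 := by
  rw [← pow_one (X 1 : MvPowerSeries (Fin 4) (ZMod 2)), coeff_X1_pow_mul]

lemma lam_Xmul_low (F : MvPowerSeries (Fin 4) (ZMod 2)) (i j k l : ℕ) :
    lam (X 1 * F) i (j+1) k l = lam F i j k l := by
  rw [lam, lam]
  refine Finset.sum_congr rfl fun m _ => ?_
  rw [coeff_X1_mul, if_pos (by omega : 1 ≤ j+1+3*m), show j+1+3*m - 1 = j+3*m by omega]

lemma lam_Xmul_two (F : MvPowerSeries (Fin 4) (ZMod 2)) (i k l : ℕ) :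
    lam (X 1 * F) (i+2) 0 k l = lam F i 2 k l := by
  rw [lam, Finset.sum_range_succ']
  have h0 : (if 2*0 ≤ i+2 then
      coeff (e (i+2 - 2*0) (0 + 3*0) k l) (X 1 * F) else 0) = 0 := by
    rw [if_pos (by omega), coeff_X1_mul, if_neg (by omega)]
  rw [h0, add_zero, lam_extend F i 2 k l (i+2) (by omega)]
  refine Finset.sum_congr rfl fun m _ => ?_
  rw [coeff_X1_mul, if_pos (by omega : 1 ≤ 0 + 3*(m+1)),
    show i+2-2*(m+1) = i - 2*m by omega, show 0+3*(m+1) - 1 = 2+3*m by omega]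
  exact if_congr (by omega) rfl rfl

lemma colon_X1 (F : MvPowerSeries (Fin 4) (ZMod 2))
    (h : X 1 * F ∈ Ideal.span {(X 3 : MvPowerSeries (Fin 4) (ZMod 2)) ^ 6, X 1 ^ 3 + X 0 ^ 2}) :
    F ∈ Ideal.span {(X 3 : MvPowerSeries (Fin 4) (ZMod 2)) ^ 6, X 1 ^ 3 + X 0 ^ 2} := by
  rw [mem_iff] at h ⊢
  intro i j k l hj hl
  interval_cases j
  · rw [show (0:ℕ) = 0 from rfl, ← lam_Xmul_low F i 0 k l]
    exact h i 1 k l (by omega) hl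
  · rw [← lam_Xmul_low F i 1 k l]
    exact h i 2 k l (by omega) hl
  · rw [← lam_Xmul_two F i k l]
    exact h (i+2) 0 k l (by omega) hl

lemma sep (F : MvPowerSeries (Fin 4) (ZMod 2))
    (h : ∀ n : ℕ, ∃ C, F - X 1 ^ n * C ∈
      Ideal.span {(X 3 : MvPowerSeries (Fin 4) (ZMod 2)) ^ 6, X 1 ^ 3 + X 0 ^ 2}) :
    F ∈ Ideal.span {(X 3 : MvPowerSeries (Fin 4) (ZMod 2)) ^ 6, X 1 ^ 3 + X 0 ^ 2} := by
  rw [mem_iff]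
  intro i j k l hj hl
  obtain ⟨C, hC⟩ := h (j + 3*i + 1)
  have h1 := (mem_iff _).1 hC i j k l hj hl
  have h2 : lam (X 1 ^ (j + 3*i + 1) * C) i j k l = 0 := by
    rw [lam]
    refine Finset.sum_eq_zero fun m hm => ?_
    simp only [Finset.mem_range] at hm
    rw [coeff_X1_pow_mul, if_neg (by omega : ¬ j + 3*i + 1 ≤ j + 3*m)]
    simp
  have h3 : F = (F - X 1 ^ (j + 3*i + 1) * C) + X 1 ^ (j + 3*i + 1) * C := by ring
  rw [h3, lam_add, h1, h2, add_zero]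


abbrev Bq := MvPowerSeries (Fin 4) (ZMod 2)

lemma S_nzd (I : Ideal Bq)
    (hI : I = Ideal.span {(X 3 : Bq) ^ 6, X 1 ^ 3 + X 0 ^ 2})
    (q : Bq ⧸ I) (h : Ideal.Quotient.mk I (X 1) * q = 0) : q = 0 := by
  obtain ⟨F, rfl⟩ := Ideal.Quotient.mk_surjective q
  rw [← map_mul, Ideal.Quotient.eq_zero_iff_mem] at h
  rw [Ideal.Quotient.eq_zero_iff_mem]
  subst hI
  exact colon_X1 F h

lemma S_nzd_pow (I : Ideal Bq)
    (hI : I = Ideal.span {(X 3 : Bq) ^ 6, X 1 ^ 3 + X 0 ^ 2}) (n : ℕ)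
    (q : Bq ⧸ I) (h : Ideal.Quotient.mk I (X 1) ^ n * q = 0) : q = 0 := by
  induction n with
  | zero => rwa [pow_zero, one_mul] at h
  | succ n ih =>
    refine ih ?_
    refine S_nzd I hI _ ?_
    rw [← mul_assoc, ← pow_succ']
    exact h

lemma S_sep (I : Ideal Bq)
    (hI : I = Ideal.span {(X 3 : Bq) ^ 6, X 1 ^ 3 + X 0 ^ 2})
    (q : Bq ⧸ I) (h : ∀ n : ℕ, ∃ c, q = Ideal.Quotient.mk I (X 1) ^ n * c) : q = 0 := by
  obtain ⟨F, rfl⟩ := Ideal.Quotient.mk_surjective q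
  rw [Ideal.Quotient.eq_zero_iff_mem]
  subst hI
  refine sep F fun n => ?_
  obtain ⟨c, hc⟩ := h n
  obtain ⟨C, rfl⟩ := Ideal.Quotient.mk_surjective c
  refine ⟨C, ?_⟩
  rw [← Ideal.Quotient.eq_zero_iff_mem, map_sub, map_mul, map_pow, sub_eq_zero]
  exact hc

lemma zmod2_cases (a : ZMod 2) : a = 0 ∨ a = 1 := by revert a; decide

lemma hom_unique (I : Ideal Bq)
    (hI : I = Ideal.span {(X 3 : Bq) ^ 6, X 1 ^ 3 + X 0 ^ 2})
    (g h : PowerSeries (ZMod 2) →+* Bq ⧸ I)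
    (hgh : g PowerSeries.X = h PowerSeries.X)
    (hg : g PowerSeries.X = Ideal.Quotient.mk I (X 1) ^ 3) : g = h := by
  have hC : ∀ a : ZMod 2, g (PowerSeries.C a) = h (PowerSeries.C a) := by
    intro a
    rcases zmod2_cases a with rfl | rfl <;> simp
  have claim : ∀ (n : ℕ) (F : PowerSeries (ZMod 2)),
      ∃ c, g F - h F = Ideal.Quotient.mk I (X 1) ^ (3*n) * c := by
    intro n
    induction n with
    | zero => exact fun F => ⟨g F - h F, by rw [mul_zero, pow_zero, one_mul]⟩
    | succ n ih =>
      intro F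
      set sh := PowerSeries.mk fun p => PowerSeries.coeff (p+1) F with hsh
      obtain ⟨c, hc⟩ := ih sh
      refine ⟨c, ?_⟩
      have expand : g F - h F = (g sh - h sh) * g PowerSeries.X := by
        conv_lhs => rw [PowerSeries.eq_shift_mul_X_add_const F]
        rw [map_add, map_add, map_mul, map_mul, hC, ← hgh, ← hsh]
        ring
      rw [expand, hc, hg, show 3*(n+1) = 3*n + 3 by ring, pow_add]
      ring
  ext F
  refine sub_eq_zero.1 (S_sep I hI _ fun n => ?_)
  obtain ⟨c, hc⟩ := claim n F
  refine ⟨Ideal.Quotient.mk I (X 1) ^ (2*n) * c, ?_⟩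
  rw [hc, ← mul_assoc, ← pow_add, show 3*n = n + 2*n by ring]


end St19

open St19

set_option synthInstance.maxHeartbeats 1000000
set_option maxHeartbeats 2000000

/-- Let `R = (ℤ/2ℤ)⟦y⟧` with `φ(y) = y³`, let
`S = (ℤ/2ℤ)⟦x,y,w,s⟧/(s⁶, y³+x²)` (with `x = X 0`, `y = X 1`, `w = X 2`, `s = X 3`) with `ψ`
induced by `x ↦ x³+s³, y ↦ y³, w ↦ w⁵+x², s ↦ xs²`, and let `f : R → S` be the continuous
(i.e. local) `(ℤ/2ℤ)`-algebra homomorphism with `f(y) = y`. Then `f` is a flat local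
homomorphism and satisfies `f ∘ φ = ψ ∘ f`. -/
theorem example_flat_morphism
    (I : Ideal (MvPowerSeries (Fin 4) (ZMod 2)))
    (hI : I = Ideal.span {(X 3 : MvPowerSeries (Fin 4) (ZMod 2)) ^ 6, X 1 ^ 3 + X 0 ^ 2})
    (φ : PowerSeries (ZMod 2) →+* PowerSeries (ZMod 2)) [IsLocalHom φ]
    (hφX : φ PowerSeries.X = PowerSeries.X ^ 3)
    (ψ : (MvPowerSeries (Fin 4) (ZMod 2) ⧸ I) →+* (MvPowerSeries (Fin 4) (ZMod 2) ⧸ I))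
    [IsLocalHom ψ]
    (hx : ψ (Ideal.Quotient.mk I (X 0)) = Ideal.Quotient.mk I (X 0 ^ 3 + X 3 ^ 3))
    (hy : ψ (Ideal.Quotient.mk I (X 1)) = Ideal.Quotient.mk I (X 1 ^ 3))
    (hw : ψ (Ideal.Quotient.mk I (X 2)) = Ideal.Quotient.mk I (X 2 ^ 5 + X 0 ^ 2))
    (hs : ψ (Ideal.Quotient.mk I (X 3)) = Ideal.Quotient.mk I (X 0 * X 3 ^ 2))
    (f : PowerSeries (ZMod 2) →+* (MvPowerSeries (Fin 4) (ZMod 2) ⧸ I)) [IsLocalHom f]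
    (hfX : f PowerSeries.X = Ideal.Quotient.mk I (X 1)) :
    f.Flat ∧ f.comp φ = ψ.comp f := by
  constructor
  · letI : Algebra (PowerSeries (ZMod 2)) (MvPowerSeries (Fin 4) (ZMod 2) ⧸ I) := f.toAlgebra
    have halg : algebraMap (PowerSeries (ZMod 2)) (MvPowerSeries (Fin 4) (ZMod 2) ⧸ I) = f :=
      RingHom.algebraMap_toAlgebra f
    change Module.Flat (PowerSeries (ZMod 2)) (MvPowerSeries (Fin 4) (ZMod 2) ⧸ I)
    rw [Module.Flat.iff_rTensor_injective']
    intro J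
    obtain ⟨r, rfl⟩ := Submodule.IsPrincipal.principal J
    -- every element of the tensor product is an elementary tensor with left factor r
    have key : ∀ z : (Submodule.span (PowerSeries (ZMod 2)) {r}) ⊗[PowerSeries (ZMod 2)]
        (MvPowerSeries (Fin 4) (ZMod 2) ⧸ I),
        ∃ m, z = (⟨r, Submodule.mem_span_singleton_self r⟩ :
          Submodule.span (PowerSeries (ZMod 2)) {r}) ⊗ₜ m := by
      intro z
      induction z using TensorProduct.induction_on with
      | zero => exact ⟨0, (TensorProduct.tmul_zero _ _).symm⟩
      | tmul a m =>
        obtain ⟨c, hc⟩ := Submodule.mem_span_singleton.1 a.2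
        refine ⟨c • m, ?_⟩
        have ha : a = c • (⟨r, Submodule.mem_span_singleton_self r⟩ :
            Submodule.span (PowerSeries (ZMod 2)) {r}) := by
          apply Subtype.ext
          simpa using hc.symm
        rw [ha, TensorProduct.smul_tmul]
      | add x y hx hy =>
        obtain ⟨m1, rfl⟩ := hx
        obtain ⟨m2, rfl⟩ := hy
        exact ⟨m1 + m2, (TensorProduct.tmul_add _ _ _).symm⟩
    rw [← LinearMap.ker_eq_bot]
    apply (Submodule.eq_bot_iff _).2
    intro z hz
    rw [LinearMap.mem_ker] at hz
    obtain ⟨m, rfl⟩ := key z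
    by_cases hr : r = 0
    · subst hr
      rw [show (⟨(0 : PowerSeries (ZMod 2)), Submodule.mem_span_singleton_self 0⟩ :
          Submodule.span (PowerSeries (ZMod 2)) {(0 : PowerSeries (ZMod 2))}) = 0 from
        Subtype.ext rfl, TensorProduct.zero_tmul]
    · rw [LinearMap.rTensor_tmul] at hz
      have hrm : r • m = 0 := by
        have h2 := congrArg (TensorProduct.lid (PowerSeries (ZMod 2))
          (MvPowerSeries (Fin 4) (ZMod 2) ⧸ I)) hz
        simpa using h2
      rw [Algebra.smul_def, halg] at hrm
      -- decompose r as X^k * unit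
      have hdec := PowerSeries.X_pow_order_mul_divXPowOrder (f := r)
      rw [← hdec, map_mul, map_pow, hfX, mul_assoc] at hrm
      have hm0 : m = 0 := by
        have h3 := S_nzd_pow I hI _ _ hrm
        have hu : IsUnit (f (PowerSeries.divXPowOrder r)) :=
          (PowerSeries.isUnit_divided_by_X_pow_order hr).map f
        exact (IsUnit.mul_right_eq_zero hu).1 h3
      rw [hm0, TensorProduct.tmul_zero]
  · have e1 : (f.comp φ) PowerSeries.X = Ideal.Quotient.mk I (X 1) ^ 3 := by
      rw [RingHom.comp_apply, hφX, map_pow, hfX]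
    have e2 : (ψ.comp f) PowerSeries.X = Ideal.Quotient.mk I (X 1) ^ 3 := by
      rw [RingHom.comp_apply, hfX, hy, map_pow]
    exact hom_unique I hI _ _ (e1.trans e2.symm) e1
end
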